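/- Let d ≥ 1 be an integer, α ∈ (1,2], β ∈ ((d+α)/2, d+α), and γ > 0. Then there is a constant C, depending only on d, α, β, γ, such that for all τ > 0 and all x ∈ ℝ^d: ∫_{ℝ^d} min( 1, |z|/τ^{1/α} )^{β−d} · τ^{−d/α} · ( τ^{1/α} / ( τ^{1/α} + |x−z| ) )^{d+γ} · |z|^{1−α} dz ≤ C · τ^{(1−α)/α}. -/

import Mathlib

open MeasureTheory Metric Module
open scoped ENNReal

private lemma lint_comp_smul {d : ℕ} (f : EuclideanSpace ℝ (Fin d) → ℝ≥0∞) {t : ℝ} (ht : 0 < t) :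
    ∫⁻ z, f z = ENNReal.ofReal (t ^ d) * ∫⁻ w, f (t • w) := by
  have htd : (0:ℝ) < t ^ d := pow_pos ht d
  let e : EuclideanSpace ℝ (Fin d) ≃ᵐ EuclideanSpace ℝ (Fin d) :=
    (Homeomorph.smul (Units.mk0 t ht.ne')).toMeasurableEquiv
  have hcoe : (⇑e) = (fun w : EuclideanSpace ℝ (Fin d) => t • w) := by
    funext w
    simp [e, Units.smul_def]
  have h2 : ∫⁻ w, f (t • w) = ENNReal.ofReal ((t ^ d)⁻¹) * ∫⁻ z, f z := by
    calc ∫⁻ w, f (t • w) = ∫⁻ z, f z ∂(Measure.map (⇑e) volume) := by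
          rw [lintegral_map_equiv f e, hcoe]
      _ = ENNReal.ofReal ((t ^ d)⁻¹) * ∫⁻ z, f z := by
          rw [hcoe, Measure.map_addHaar_smul volume ht.ne', lintegral_smul_measure,
            finrank_euclideanSpace, Fintype.card_fin, abs_of_pos (inv_pos.2 htd), smul_eq_mul]
  rw [h2, ← mul_assoc, ← ENNReal.ofReal_mul htd.le, mul_inv_cancel₀ htd.ne', ENNReal.ofReal_one,
    one_mul]

private lemma ball_rpow_lt_top (d : ℕ) (hd : 1 ≤ d) {e : ℝ} (he : -(d : ℝ) < e) :
    (∫⁻ w : EuclideanSpace ℝ (Fin d) in ball (0 : EuclideanSpace ℝ (Fin d)) 1,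
      ENNReal.ofReal (‖w‖ ^ e)) < ⊤ := by
  haveI : Nonempty (Fin d) := Fin.pos_iff_nonempty.mp hd
  set E := EuclideanSpace ℝ (Fin d)
  haveI : Nontrivial E := inferInstance
  set b : ℕ → ℝ := fun n => (1/2 : ℝ) ^ n with hb
  have hbpos : ∀ n, 0 < b n := fun n => pow_pos (by norm_num) n
  set S : ℕ → Set E := fun n => ball (0 : E) (b n) \ ball (0 : E) (b (n + 1)) with hS
  -- covering
  have hcover : ball (0 : E) 1 ⊆ {0} ∪ ⋃ n, S n := by
    intro w hw
    rcases eq_or_ne w 0 with rfl | hw0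
    · exact Set.mem_union_left _ rfl
    · have hr : 0 < ‖w‖ := norm_pos_iff.mpr hw0
      have hr1 : ‖w‖ < 1 := by simpa using hw
      have hex : ∃ n, b (n + 1) ≤ ‖w‖ := by
        obtain ⟨m, hm⟩ := exists_pow_lt_of_lt_one hr (by norm_num : (1/2 : ℝ) < 1)
        exact ⟨m, le_of_lt (lt_of_le_of_lt (pow_le_pow_of_le_one (by norm_num) (by norm_num)
          (Nat.le_succ m)) hm)⟩
      classical
      set n := Nat.find hex with hn
      have h1 : b (n + 1) ≤ ‖w‖ := Nat.find_spec hex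
      have h2 : ‖w‖ < b n := by
        rcases Nat.eq_zero_or_pos n with h0 | hpos
        · rw [h0]; simpa [hb] using hr1
        · have hmin := Nat.find_min hex (Nat.pred_lt hpos.ne')
          conv_rhs => rw [← Nat.succ_pred_eq_of_pos hpos]
          exact not_le.mp hmin
      refine Set.mem_union_right _ (Set.mem_iUnion.mpr ⟨n, ?_⟩)
      simp only [hS, Set.mem_diff, mem_ball, dist_zero_right]
      exact ⟨h2, fun h => absurd h (not_lt.mpr h1)⟩
  -- shell estimates
  set V := volume (ball (0 : E) 1) with hV
  have hVlt : V < ⊤ := measure_ball_lt_top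
  set q : ℝ := (1/2 : ℝ) ^ (e + (d : ℝ)) with hq
  have hq0 : 0 < q := Real.rpow_pos_of_pos (by norm_num) _
  have hq1 : q < 1 := Real.rpow_lt_one (by norm_num) (by norm_num) (by linarith)
  set K : ℝ := (1/2 : ℝ) ^ e with hK
  have hK0 : 0 < K := Real.rpow_pos_of_pos (by norm_num) _
  have shell : ∀ n, (∫⁻ w in S n, ENNReal.ofReal (‖w‖ ^ e)) ≤
      ENNReal.ofReal ((K + 1) * q ^ n) * V := by
    intro n
    have hc : b (n+1) ^ e + b n ^ e = b n ^ e * (K + 1) := by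
      have : b (n+1) = b n * (1/2 : ℝ) := by rw [hb]; ring
      rw [this, Real.mul_rpow (hbpos n).le (by norm_num)]
      ring
    have harith : (b (n+1) ^ e + b n ^ e) * b n ^ d = (K + 1) * q ^ n := by
      rw [hc]
      have h1 : (b n : ℝ) ^ (d : ℕ) = b n ^ (d : ℝ) := (Real.rpow_natCast _ d).symm
      rw [mul_comm (b n ^ e), mul_assoc, h1, ← Real.rpow_add (hbpos n)]
      congr 1
      show ((1/2 : ℝ) ^ n) ^ (e + (d:ℝ)) = q ^ n
      rw [← Real.rpow_natCast (1/2 : ℝ) n, ← Real.rpow_natCast q n, hq,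
        ← Real.rpow_mul (by norm_num : (0:ℝ) ≤ 1/2), ← Real.rpow_mul (by norm_num : (0:ℝ) ≤ 1/2)]
      ring_nf
    calc (∫⁻ w in S n, ENNReal.ofReal (‖w‖ ^ e))
        ≤ ∫⁻ _ in S n, ENNReal.ofReal (b (n+1) ^ e + b n ^ e) := by
          refine setLIntegral_mono' (measurableSet_ball.diff measurableSet_ball) ?_
          intro w hw
          obtain ⟨hw1, hw2⟩ := hw
          rw [mem_ball, dist_zero_right] at hw1
          rw [mem_ball, dist_zero_right, not_lt] at hw2
          apply ENNReal.ofReal_le_ofReal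
          rcases le_or_gt e 0 with he0 | he0
          · have := Real.rpow_le_rpow_of_nonpos (hbpos (n+1)) hw2 he0
            have h2 : (0:ℝ) ≤ b n ^ e := (Real.rpow_pos_of_pos (hbpos n) e).le
            linarith
          · have h0w : 0 ≤ ‖w‖ := norm_nonneg w
            have := Real.rpow_le_rpow h0w hw1.le he0.le
            have h2 : (0:ℝ) ≤ b (n+1) ^ e := (Real.rpow_pos_of_pos (hbpos (n+1)) e).le
            linarith
      _ = ENNReal.ofReal (b (n+1) ^ e + b n ^ e) * volume (S n) := setLIntegral_const _ _
      _ ≤ ENNReal.ofReal (b (n+1) ^ e + b n ^ e) * volume (ball (0 : E) (b n)) := by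
          exact mul_le_mul_of_nonneg_left (measure_mono Set.diff_subset) zero_le
      _ = ENNReal.ofReal (b (n+1) ^ e + b n ^ e) * (ENNReal.ofReal (b n ^ d) * V) := by
          rw [Measure.addHaar_ball volume (0 : E) (hbpos n).le, finrank_euclideanSpace,
            Fintype.card_fin]
      _ = ENNReal.ofReal ((b (n+1) ^ e + b n ^ e) * b n ^ d) * V := by
          rw [← mul_assoc, ← ENNReal.ofReal_mul (by positivity)]
      _ = ENNReal.ofReal ((K + 1) * q ^ n) * V := by rw [harith]
  have hsum : (∑' n, ENNReal.ofReal ((K + 1) * q ^ n) * V) < ⊤ := by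
    have heq : (∑' n, ENNReal.ofReal ((K + 1) * q ^ n) * V) =
        ENNReal.ofReal (K + 1) * (∑' n, (ENNReal.ofReal q) ^ n) * V := by
      rw [ENNReal.tsum_mul_right, ← ENNReal.tsum_mul_left]
      congr 1
      exact tsum_congr fun n => by
        rw [ENNReal.ofReal_mul (by positivity), ENNReal.ofReal_pow hq0.le]
    rw [heq]
    have hgeo : (∑' n, (ENNReal.ofReal q) ^ n) < ⊤ := by
      rw [ENNReal.tsum_geometric]
      exact ENNReal.inv_lt_top.2 (tsub_pos_of_lt (ENNReal.ofReal_lt_one.2 hq1))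
    exact ENNReal.mul_lt_top (ENNReal.mul_lt_top ENNReal.ofReal_lt_top hgeo) hVlt
  refine lt_of_le_of_lt ?_ hsum
  calc (∫⁻ w in ball (0:E) 1, ENNReal.ofReal (‖w‖ ^ e))
      ≤ ∫⁻ w in ({0} ∪ ⋃ n, S n : Set E), ENNReal.ofReal (‖w‖ ^ e) :=
        lintegral_mono_set hcover
    _ ≤ (∫⁻ w in ({0} : Set E), ENNReal.ofReal (‖w‖ ^ e)) +
        ∫⁻ w in (⋃ n, S n), ENNReal.ofReal (‖w‖ ^ e) := lintegral_union_le _ _ _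
    _ = ∫⁻ w in (⋃ n, S n), ENNReal.ofReal (‖w‖ ^ e) := by
        rw [setLIntegral_measure_zero _ _ (measure_singleton 0), zero_add]
    _ ≤ ∑' n, ∫⁻ w in S n, ENNReal.ofReal (‖w‖ ^ e) := lintegral_iUnion_le _ _
    _ ≤ ∑' n, ENNReal.ofReal ((K + 1) * q ^ n) * V := ENNReal.tsum_le_tsum shell

/-- Estimate (5.6) of the paper: for `γ > 0`,
`∫ min(1, |z|/τ^{1/α})^{β−d} τ^{−d/α} (τ^{1/α}/(τ^{1/α}+|x−z|))^{d+γ} |z|^{1−α} dz ≤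
C τ^{(1−α)/α}`, uniformly in `τ > 0` and `x ∈ ℝ^d`. -/
theorem weighted_kernel_integral_bound
    (d : ℕ) (hd : 1 ≤ d) (α β γ : ℝ)
    (hα1 : 1 < α) (hα2 : α ≤ 2)
    (hβ1 : ((d : ℝ) + α) / 2 < β) (hβ2 : β < (d : ℝ) + α)
    (hγ : 0 < γ) :
    ∃ C : ℝ, 0 < C ∧
      ∀ τ : ℝ, 0 < τ → ∀ x : EuclideanSpace ℝ (Fin d),
        (∫⁻ z, ENNReal.ofReal
            (min 1 (‖z‖ / τ ^ (1 / α)) ^ (β - d) * τ ^ (-(d : ℝ) / α) *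
              (τ ^ (1 / α) / (τ ^ (1 / α) + ‖x - z‖)) ^ ((d : ℝ) + γ) *
              ‖z‖ ^ (1 - α)))
          ≤ ENNReal.ofReal (C * τ ^ ((1 - α) / α)) := by
  have hα0 : (0:ℝ) < α := lt_trans one_pos hα1
  have hd1 : (1:ℝ) ≤ (d:ℝ) := by exact_mod_cast hd
  -- the two model integrals
  set A := ∫⁻ w : EuclideanSpace ℝ (Fin d) in ball (0 : EuclideanSpace ℝ (Fin d)) 1,
    ENNReal.ofReal (‖w‖ ^ (β - (d:ℝ) + (1 - α))) with hA
  set B := ∫⁻ w : EuclideanSpace ℝ (Fin d),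
    ENNReal.ofReal ((1 + ‖w‖) ^ (-((d:ℝ) + γ))) with hB
  have hAlt : A < ⊤ := ball_rpow_lt_top d hd (by linarith)
  have hBlt : B < ⊤ := by
    have h := finite_integral_one_add_norm
      (E := EuclideanSpace ℝ (Fin d)) (μ := volume) (r := (d:ℝ) + γ)
      (by rw [finrank_euclideanSpace, Fintype.card_fin]; linarith)
    exact h
  have hABne : A + B ≠ ⊤ := by
    exact (ENNReal.add_lt_top.mpr ⟨hAlt, hBlt⟩).ne
  refine ⟨(A + B).toReal + 1, by positivity, ?_⟩
  intro τ hτ x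
  set t := τ ^ (1/α) with htdef
  have ht : 0 < t := Real.rpow_pos_of_pos hτ _
  set y := t⁻¹ • x with hy
  -- the uniform bound for the rescaled integral
  have hGbound : (∫⁻ w : EuclideanSpace ℝ (Fin d), ENNReal.ofReal
      (min 1 ‖w‖ ^ (β - (d:ℝ)) * ((1:ℝ)/(1 + ‖y - w‖)) ^ ((d:ℝ) + γ) * ‖w‖ ^ (1 - α)))
      ≤ A + B := by
    have hpt : ∀ w : EuclideanSpace ℝ (Fin d),
        ENNReal.ofReal
          (min 1 ‖w‖ ^ (β - (d:ℝ)) * ((1:ℝ)/(1 + ‖y - w‖)) ^ ((d:ℝ) + γ) * ‖w‖ ^ (1 - α)) ≤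
        (ball (0 : EuclideanSpace ℝ (Fin d)) 1).indicator
            (fun w => ENNReal.ofReal (‖w‖ ^ (β - (d:ℝ) + (1 - α)))) w
          + ENNReal.ofReal ((1 + ‖y - w‖) ^ (-((d:ℝ) + γ))) := by
      intro w
      have hs0 : (0:ℝ) < 1 + ‖y - w‖ := by positivity
      have hsle : ((1:ℝ)/(1 + ‖y - w‖)) ^ ((d:ℝ) + γ) ≤ 1 := by
        apply Real.rpow_le_one (by positivity) _ (by positivity)
        rw [div_le_one hs0]
        linarith [norm_nonneg (y - w)]
      have hseq : ((1:ℝ)/(1 + ‖y - w‖)) ^ ((d:ℝ) + γ) = (1 + ‖y - w‖) ^ (-((d:ℝ) + γ)) := by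
        rw [one_div, Real.rpow_neg hs0.le, ← Real.inv_rpow hs0.le]
      rcases lt_or_ge ‖w‖ 1 with h1 | h1
      · -- inside the unit ball
        have hmem : w ∈ ball (0 : EuclideanSpace ℝ (Fin d)) 1 := by
          simpa [mem_ball, dist_zero_right] using h1
        rw [Set.indicator_of_mem hmem]
        refine le_trans ?_ le_self_add
        apply ENNReal.ofReal_le_ofReal
        rcases eq_or_ne w 0 with rfl | hw0
        · have : ‖(0 : EuclideanSpace ℝ (Fin d))‖ ^ (1 - α) = 0 := by
            rw [norm_zero, Real.zero_rpow (by linarith)]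
          rw [this, mul_zero]
          positivity
        · have hw : (0:ℝ) < ‖w‖ := norm_pos_iff.mpr hw0
          rw [min_eq_right h1.le]
          calc ‖w‖ ^ (β - (d:ℝ)) * ((1:ℝ)/(1 + ‖y - w‖)) ^ ((d:ℝ) + γ) * ‖w‖ ^ (1 - α)
              ≤ ‖w‖ ^ (β - (d:ℝ)) * 1 * ‖w‖ ^ (1 - α) := by
                apply mul_le_mul_of_nonneg_right _ (Real.rpow_nonneg hw.le _)
                apply mul_le_mul_of_nonneg_left hsle (Real.rpow_nonneg hw.le _)
            _ = ‖w‖ ^ (β - (d:ℝ) + (1 - α)) := by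
                rw [mul_one, ← Real.rpow_add hw]
      · -- outside the unit ball
        have hmin : min 1 ‖w‖ = 1 := min_eq_left h1
        refine le_trans ?_ le_add_self
        apply ENNReal.ofReal_le_ofReal
        rw [hmin, Real.one_rpow, one_mul, ← hseq]
        have hwle : ‖w‖ ^ (1 - α) ≤ 1 :=
          Real.rpow_le_one_of_one_le_of_nonpos h1 (by linarith)
        calc ((1:ℝ)/(1 + ‖y - w‖)) ^ ((d:ℝ) + γ) * ‖w‖ ^ (1 - α)
            ≤ ((1:ℝ)/(1 + ‖y - w‖)) ^ ((d:ℝ) + γ) * 1 :=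
              mul_le_mul_of_nonneg_left hwle (Real.rpow_nonneg (by positivity) _)
          _ = ((1:ℝ)/(1 + ‖y - w‖)) ^ ((d:ℝ) + γ) := mul_one _
    calc (∫⁻ w : EuclideanSpace ℝ (Fin d), ENNReal.ofReal
        (min 1 ‖w‖ ^ (β - (d:ℝ)) * ((1:ℝ)/(1 + ‖y - w‖)) ^ ((d:ℝ) + γ) * ‖w‖ ^ (1 - α)))
        ≤ ∫⁻ w, ((ball (0 : EuclideanSpace ℝ (Fin d)) 1).indicator
            (fun w => ENNReal.ofReal (‖w‖ ^ (β - (d:ℝ) + (1 - α)))) w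
          + ENNReal.ofReal ((1 + ‖y - w‖) ^ (-((d:ℝ) + γ)))) := lintegral_mono hpt
      _ = (∫⁻ w, (ball (0 : EuclideanSpace ℝ (Fin d)) 1).indicator
            (fun w => ENNReal.ofReal (‖w‖ ^ (β - (d:ℝ) + (1 - α)))) w)
          + ∫⁻ w, ENNReal.ofReal ((1 + ‖y - w‖) ^ (-((d:ℝ) + γ))) := by
          apply lintegral_add_left
          apply Measurable.indicator _ measurableSet_ball
          fun_prop
      _ = A + B := by
          congr 1
          · rw [hA, lintegral_indicator measurableSet_ball]
          · rw [hB]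
            have : ∀ w : EuclideanSpace ℝ (Fin d), ‖y - w‖ = ‖w - y‖ := fun w => norm_sub_rev y w
            simp_rw [this]
            exact lintegral_sub_right_eq_self
              (fun w => ENNReal.ofReal ((1 + ‖w‖) ^ (-((d:ℝ) + γ)))) y
  -- change of variables z = t • w
  have hFeq : ∀ w : EuclideanSpace ℝ (Fin d),
      (min 1 (‖t • w‖ / t) ^ (β - (d:ℝ)) * τ ^ (-(d:ℝ) / α) *
          (t / (t + ‖x - t • w‖)) ^ ((d:ℝ) + γ) * ‖t • w‖ ^ (1 - α))
      = t ^ ((1:ℝ) - α - (d:ℝ)) *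
        (min 1 ‖w‖ ^ (β - (d:ℝ)) * ((1:ℝ)/(1 + ‖y - w‖)) ^ ((d:ℝ) + γ) * ‖w‖ ^ (1 - α)) := by
    intro w
    have hnorm : ‖t • w‖ = t * ‖w‖ := by
      rw [norm_smul, Real.norm_of_nonneg ht.le]
    have h1 : ‖t • w‖ / t = ‖w‖ := by rw [hnorm, mul_div_cancel_left₀ _ ht.ne']
    have h2 : x - t • w = t • (y - w) := by
      rw [hy, smul_sub, smul_inv_smul₀ ht.ne']
    have h3 : ‖x - t • w‖ = t * ‖y - w‖ := by
      rw [h2, norm_smul, Real.norm_of_nonneg ht.le]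
    have h4 : t / (t + ‖x - t • w‖) = 1 / (1 + ‖y - w‖) := by
      rw [h3, div_eq_div_iff (by positivity) (by positivity)]
      ring
    have h5 : τ ^ (-(d:ℝ) / α) = t ^ (-(d:ℝ)) := by
      rw [htdef, ← Real.rpow_mul hτ.le]
      congr 1
      field_simp
    have h6 : ‖t • w‖ ^ (1 - α) = t ^ (1 - α) * ‖w‖ ^ (1 - α) := by
      rw [hnorm, Real.mul_rpow ht.le (norm_nonneg w)]
    rw [h1, h4, h5, h6]
    rw [show t ^ ((1:ℝ) - α - (d:ℝ)) = t ^ (-(d:ℝ)) * t ^ (1 - α) by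
      rw [← Real.rpow_add ht]; ring_nf]
    ring
  have hc0 : (0:ℝ) ≤ t ^ ((1:ℝ) - α - (d:ℝ)) := (Real.rpow_pos_of_pos ht _).le
  have hABle : A + B ≤ ENNReal.ofReal ((A + B).toReal + 1) := by
    calc A + B = ENNReal.ofReal ((A + B).toReal) := (ENNReal.ofReal_toReal hABne).symm
      _ ≤ ENNReal.ofReal ((A + B).toReal + 1) :=
          ENNReal.ofReal_le_ofReal (by linarith)
  have hpow : t ^ d * t ^ ((1:ℝ) - α - (d:ℝ)) = τ ^ ((1 - α) / α) := by
    rw [← Real.rpow_natCast t d, ← Real.rpow_add ht, htdef, ← Real.rpow_mul hτ.le]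
    congr 1
    field_simp
    ring
  calc (∫⁻ z, ENNReal.ofReal
            (min 1 (‖z‖ / t) ^ (β - (d:ℝ)) * τ ^ (-(d:ℝ) / α) *
              (t / (t + ‖x - z‖)) ^ ((d:ℝ) + γ) * ‖z‖ ^ (1 - α)))
      = ENNReal.ofReal (t ^ d) * ∫⁻ w, ENNReal.ofReal
            (min 1 (‖t • w‖ / t) ^ (β - (d:ℝ)) * τ ^ (-(d:ℝ) / α) *
              (t / (t + ‖x - t • w‖)) ^ ((d:ℝ) + γ) * ‖t • w‖ ^ (1 - α)) :=
        lint_comp_smul _ ht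
    _ = ENNReal.ofReal (t ^ d) * ∫⁻ w, ENNReal.ofReal (t ^ ((1:ℝ) - α - (d:ℝ))) *
          ENNReal.ofReal
            (min 1 ‖w‖ ^ (β - (d:ℝ)) * ((1:ℝ)/(1 + ‖y - w‖)) ^ ((d:ℝ) + γ) * ‖w‖ ^ (1 - α)) := by
        congr 1
        apply lintegral_congr
        intro w
        rw [hFeq w, ENNReal.ofReal_mul hc0]
    _ = ENNReal.ofReal (t ^ d) * (ENNReal.ofReal (t ^ ((1:ℝ) - α - (d:ℝ))) *
          ∫⁻ w, ENNReal.ofReal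
            (min 1 ‖w‖ ^ (β - (d:ℝ)) * ((1:ℝ)/(1 + ‖y - w‖)) ^ ((d:ℝ) + γ) * ‖w‖ ^ (1 - α))) := by
        rw [lintegral_const_mul' _ _ ENNReal.ofReal_ne_top]
    _ ≤ ENNReal.ofReal (t ^ d) * (ENNReal.ofReal (t ^ ((1:ℝ) - α - (d:ℝ))) * (A + B)) := by
        gcongr
    _ ≤ ENNReal.ofReal (t ^ d) * (ENNReal.ofReal (t ^ ((1:ℝ) - α - (d:ℝ))) *
          ENNReal.ofReal ((A + B).toReal + 1)) := by
        gcongr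
    _ = ENNReal.ofReal (((A + B).toReal + 1) * τ ^ ((1 - α) / α)) := by
        rw [← mul_assoc, ← ENNReal.ofReal_mul (pow_nonneg ht.le d), hpow,
          ← ENNReal.ofReal_mul (Real.rpow_nonneg hτ.le _), mul_comm]
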